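/- Let α ∈ (0,1] and f ∈ L¹(ℝ³). The following are equivalent: (i) there exists K ≥ 0 such that Ω(f, I(x,r)) ≤ K·r^α for every x ∈ ℝ³ and every 0 < r < 1/2; (ii) there exist a function g : ℝ³ → ℝ and L ≥ 0 such that f = g almost everywhere and |g(x) − g(y)| ≤ L·|x − y|^α whenever x, y ∈ ℝ³ satisfy |x − y| ≤ 1/4. In other words, membership in the weighted bmo space with power weight φ(r) = r^α is equivalent to having a locally α-Hölder continuous representative. -/

import Mathlib

open MeasureTheory Set

/-- The open cube in `ℝ³` centered at `x` with side length `r`. -/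
def cube (x : EuclideanSpace ℝ (Fin 3)) (r : ℝ) : Set (EuclideanSpace ℝ (Fin 3)) :=
  {y | ∀ i : Fin 3, |y i - x i| < r / 2}

/-- The mean value `f_{I(x,r)}` of `f` over the cube `I(x,r)` (of volume `r³`). -/
noncomputable def cubeAvg (f : EuclideanSpace ℝ (Fin 3) → ℝ)
    (x : EuclideanSpace ℝ (Fin 3)) (r : ℝ) : ℝ :=
  (r ^ 3)⁻¹ * ∫ y in cube x r, f y

/-- The mean oscillation `Ω(f, I(x,r))` of `f` over the cube `I(x,r)`. -/
noncomputable def meanOsc (f : EuclideanSpace ℝ (Fin 3) → ℝ)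
    (x : EuclideanSpace ℝ (Fin 3)) (r : ℝ) : ℝ :=
  (r ^ 3)⁻¹ * ∫ y in cube x r, |f y - cubeAvg f x r|

lemma cube_eq (x : EuclideanSpace ℝ (Fin 3)) (r : ℝ) :
    cube x r = (MeasurableEquiv.toLp 2 (Fin 3 → ℝ)).symm ⁻¹'
      (Set.univ.pi fun i => Ioo (x i - r / 2) (x i + r / 2)) := by
  ext y
  simp only [cube, mem_setOf_eq, mem_preimage, mem_pi, mem_univ, forall_true_left, mem_Ioo,
    MeasurableEquiv.coe_toLp_symm, MeasurableEquiv.coe_mk, Equiv.coe_fn_mk,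
    abs_lt]
  constructor
  · intro h i; have := h i; constructor <;> linarith [this.1, this.2]
  · intro h i; have := h i; constructor <;> linarith [this.1, this.2]

lemma measurableSet_cube (x : EuclideanSpace ℝ (Fin 3)) (r : ℝ) :
    MeasurableSet (cube x r) := by
  rw [cube_eq]
  exact (MeasurableEquiv.toLp 2 (Fin 3 → ℝ)).symm.measurable
    (MeasurableSet.univ_pi fun i => measurableSet_Ioo)

lemma volume_cube (x : EuclideanSpace ℝ (Fin 3)) {r : ℝ} (hr : 0 ≤ r) :
    volume (cube x r) = ENNReal.ofReal (r ^ 3) := by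
  rw [cube_eq, (EuclideanSpace.volume_preserving_symm_measurableEquiv_toLp (Fin 3)).measure_preimage
    (MeasurableSet.univ_pi fun i => measurableSet_Ioo).nullMeasurableSet]
  rw [volume_pi_pi]
  simp only [Real.volume_Ioo]
  have : ∀ i : Fin 3, x i + r / 2 - (x i - r / 2) = r := fun i => by ring
  simp only [this]
  rw [Finset.prod_const]
  simp [← ENNReal.ofReal_pow hr]


lemma volume_cube_lt_top (x : EuclideanSpace ℝ (Fin 3)) {r : ℝ} (hr : 0 ≤ r) :
    volume (cube x r) < ⊤ := by
  rw [volume_cube x hr]; exact ENNReal.ofReal_lt_top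

lemma key_avg_sub (f : EuclideanSpace ℝ (Fin 3) → ℝ) (hf : Integrable f volume)
    {x : EuclideanSpace ℝ (Fin 3)} {r : ℝ} (hr : 0 < r)
    {s : Set (EuclideanSpace ℝ (Fin 3))} (hsub : s ⊆ cube x r)
    (hpos : 0 < volume s) :
    |(volume s).toReal⁻¹ * (∫ y in s, f y) - cubeAvg f x r| ≤
      (volume s).toReal⁻¹ * (r ^ 3 * meanOsc f x r) := by
  set c := cubeAvg f x r with hc
  have hr3 : (0:ℝ) < r ^ 3 := by positivity
  have hfin : volume s < ⊤ := lt_of_le_of_lt (measure_mono hsub) (volume_cube_lt_top x hr.le)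
  set v := (volume s).toReal with hv
  have hvpos : 0 < v := ENNReal.toReal_pos hpos.ne' hfin.ne
  have hIs : IntegrableOn f s := hf.integrableOn
  have hIcube : IntegrableOn f (cube x r) := hf.integrableOn
  have hconst_s : IntegrableOn (fun _ => c) s := integrableOn_const hfin.ne
  have hconst : IntegrableOn (fun _ => c) (cube x r) :=
    integrableOn_const (volume_cube_lt_top x hr.le).ne
  have hsub_int : IntegrableOn (fun y => f y - c) (cube x r) := hIcube.sub hconst
  have h1 : ∫ y in s, (f y - c) = (∫ y in s, f y) - v * c := by
    rw [integral_sub hIs hconst_s, setIntegral_const, smul_eq_mul, measureReal_def]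
  have h2 : (volume s).toReal⁻¹ * (∫ y in s, f y) - c = v⁻¹ * ∫ y in s, (f y - c) := by
    rw [h1, mul_sub, ← hv]
    field_simp
  rw [h2, abs_mul, abs_of_nonneg (by positivity : (0:ℝ) ≤ v⁻¹)]
  gcongr
  calc |∫ y in s, (f y - c)| ≤ ∫ y in s, |f y - c| := by
        simpa using norm_integral_le_integral_norm (μ := volume.restrict s) (fun y => f y - c)
    _ ≤ ∫ y in cube x r, |f y - c| := by
        refine setIntegral_mono_set hsub_int.abs ?_ (HasSubset.Subset.eventuallyLE hsub)
        filter_upwards with y using abs_nonneg _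
    _ = r ^ 3 * meanOsc f x r := by
        rw [meanOsc, ← hc]; field_simp

lemma cubeAvg_sub_cubeAvg (f : EuclideanSpace ℝ (Fin 3) → ℝ) (hf : Integrable f volume)
    {x x' : EuclideanSpace ℝ (Fin 3)} {r r' : ℝ} (hr : 0 < r) (hr' : 0 < r')
    (hsub : cube x' r' ⊆ cube x r) :
    |cubeAvg f x' r' - cubeAvg f x r| ≤ (r' ^ 3)⁻¹ * (r ^ 3 * meanOsc f x r) := by
  have h := key_avg_sub f hf hr hsub (s := cube x' r') ?_
  · have hv : (volume (cube x' r')).toReal = r' ^ 3 := by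
      rw [volume_cube x' hr'.le, ENNReal.toReal_ofReal (by positivity)]
    rw [hv] at h
    exact h
  · rw [volume_cube x' hr'.le]
    exact ENNReal.ofReal_pos.2 (by positivity)

lemma abs_coord_le_norm (v : EuclideanSpace ℝ (Fin 3)) (i : Fin 3) : |v i| ≤ ‖v‖ := by
  rw [EuclideanSpace.norm_eq]
  have : |v i| = Real.sqrt (|v i| ^ 2) := by
    rw [Real.sqrt_sq_eq_abs, abs_abs]
  rw [this]
  apply Real.sqrt_le_sqrt
  calc |v i| ^ 2 = ‖v i‖ ^ 2 := by rw [Real.norm_eq_abs]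
    _ ≤ ∑ j, ‖v j‖ ^ 2 :=
      Finset.single_le_sum (f := fun j => ‖v j‖ ^ 2) (fun j _ => by positivity)
        (Finset.mem_univ i)

lemma sub_coord (x y : EuclideanSpace ℝ (Fin 3)) (i : Fin 3) : (x - y) i = x i - y i := rfl

lemma cube_subset_cube {x x' : EuclideanSpace ℝ (Fin 3)} {r r' : ℝ}
    (h : r' + 2 * ‖x' - x‖ ≤ r) : cube x' r' ⊆ cube x r := by
  intro y hy i
  have h1 : |y i - x' i| < r' / 2 := hy i
  have h2 : |x' i - x i| ≤ ‖x' - x‖ := by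
    have := abs_coord_le_norm (x' - x) i; rwa [sub_coord] at this
  calc |y i - x i| ≤ |y i - x' i| + |x' i - x i| := abs_sub_le _ _ _
    _ < r' / 2 + ‖x' - x‖ := by linarith
    _ ≤ r / 2 := by linarith

lemma closedBall_subset_cube {x : EuclideanSpace ℝ (Fin 3)} {s r : ℝ} (h : 2 * s < r) :
    Metric.closedBall x s ⊆ cube x r := by
  intro y hy i
  have h2 : |y i - x i| ≤ ‖y - x‖ := by
    have := abs_coord_le_norm (y - x) i; rwa [sub_coord] at this
  have : ‖y - x‖ ≤ s := by rwa [Metric.mem_closedBall, dist_eq_norm] at hy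
  calc |y i - x i| ≤ s := le_trans h2 this
    _ < r / 2 := by linarith

lemma dist_le_of_mem_cube {x y z : EuclideanSpace ℝ (Fin 3)} {r : ℝ} (hr : 0 ≤ r)
    (hy : y ∈ cube x r) (hz : z ∈ cube x r) : ‖y - z‖ ≤ Real.sqrt 3 * r := by
  rw [EuclideanSpace.norm_eq]
  have h3 : Real.sqrt 3 * r = Real.sqrt (3 * r ^ 2) := by
    rw [Real.sqrt_mul (by norm_num)]
    congr 1
    rw [Real.sqrt_sq hr]
  rw [h3]
  apply Real.sqrt_le_sqrt
  have : ∀ i : Fin 3, ‖(y - z) i‖ ^ 2 ≤ r ^ 2 := by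
    intro i
    have h1 : |y i - x i| < r / 2 := hy i
    have h2 : |z i - x i| < r / 2 := hz i
    have : |y i - z i| ≤ r := by
      calc |y i - z i| ≤ |y i - x i| + |x i - z i| := abs_sub_le _ _ _
        _ ≤ r := by rw [abs_sub_comm (x i)]; linarith
    rw [sub_coord, Real.norm_eq_abs]
    have habs : (0:ℝ) ≤ |y i - z i| := abs_nonneg _
    nlinarith [sq_abs (y i - z i)]
  calc ∑ i, ‖(y - z) i‖ ^ 2 ≤ ∑ _i : Fin 3, r ^ 2 := Finset.sum_le_sum fun i _ => this i
    _ = 3 * r ^ 2 := by rw [Finset.sum_const]; simp [mul_comm]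

lemma holder_extend {g : EuclideanSpace ℝ (Fin 3) → ℝ} {L c : ℝ} {α : ℝ}
    (hα0 : 0 < α) (hL : 0 ≤ L) (n : ℕ) (hn : 0 < n)
    (h : ∀ x y, ‖x - y‖ ≤ c → |g x - g y| ≤ L * ‖x - y‖ ^ α) :
    ∀ x y, ‖x - y‖ ≤ n * c → |g x - g y| ≤ n * L * ‖x - y‖ ^ α := by
  intro x y hxy
  set d := ‖x - y‖ with hd
  have hd0 : 0 ≤ d := norm_nonneg _
  have hn1 : (1:ℝ) ≤ n := by exact_mod_cast hn
  have hnpos : (0:ℝ) < n := by positivity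
  set z : ℕ → EuclideanSpace ℝ (Fin 3) := fun k => x + ((k : ℝ)/n) • (y - x) with hz
  have hz0 : z 0 = x := by simp [hz]
  have hzn : z n = y := by
    simp only [hz]
    rw [div_self hnpos.ne']
    simp
  have hstep : ∀ k : ℕ, ‖z k - z (k+1)‖ = d / n := by
    intro k
    have e : z k - z (k+1) = -((1/(n:ℝ)) • (y - x)) := by
      simp only [hz]
      push_cast
      module
    rw [e, norm_neg, norm_smul, norm_sub_rev y x, ← hd]
    simp [abs_of_pos (by positivity : (0:ℝ) < 1/(n:ℝ))]
    ring
  have hterm : ∀ k : ℕ, |g (z k) - g (z (k+1))| ≤ L * d ^ α := by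
    intro k
    have h1 : ‖z k - z (k+1)‖ ≤ c := by
      rw [hstep k]
      rw [div_le_iff₀ hnpos]
      calc d ≤ n * c := hxy
        _ = c * n := by ring
    calc |g (z k) - g (z (k+1))| ≤ L * ‖z k - z (k+1)‖ ^ α := h _ _ h1
      _ = L * (d / n) ^ α := by rw [hstep k]
      _ ≤ L * d ^ α := by
          have := Real.rpow_le_rpow (by positivity : (0:ℝ) ≤ d / n)
            (div_le_self hd0 hn1) hα0.le
          nlinarith [Real.rpow_nonneg (by positivity : (0:ℝ) ≤ d / n) α]
  have htel : g x - g y = ∑ k ∈ Finset.range n, (g (z k) - g (z (k+1))) := by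
    rw [Finset.sum_range_sub' (fun k => g (z k)) n, hz0, hzn]
  calc |g x - g y| = |∑ k ∈ Finset.range n, (g (z k) - g (z (k+1)))| := by rw [htel]
    _ ≤ ∑ k ∈ Finset.range n, |g (z k) - g (z (k+1))| := Finset.abs_sum_le_sum_abs _ _
    _ ≤ ∑ _k ∈ Finset.range n, L * d ^ α := Finset.sum_le_sum fun k _ => hterm k
    _ = n * L * d ^ α := by rw [Finset.sum_const, Finset.card_range]; simp; ring

lemma cubeAvg_congr {f g : EuclideanSpace ℝ (Fin 3) → ℝ} (hfg : f =ᵐ[volume] g)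
    (x : EuclideanSpace ℝ (Fin 3)) (r : ℝ) : cubeAvg f x r = cubeAvg g x r := by
  unfold cubeAvg
  congr 1
  exact integral_congr_ae (ae_restrict_of_ae hfg)

lemma meanOsc_congr {f g : EuclideanSpace ℝ (Fin 3) → ℝ} (hfg : f =ᵐ[volume] g)
    (x : EuclideanSpace ℝ (Fin 3)) (r : ℝ) : meanOsc f x r = meanOsc g x r := by
  unfold meanOsc
  rw [cubeAvg_congr hfg]
  congr 1
  refine integral_congr_ae (ae_restrict_of_ae ?_)
  filter_upwards [hfg] with y hy using by rw [hy]

lemma holder_to_bmo {α : ℝ} (hα0 : 0 < α) (hα1 : α ≤ 1)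
    {f g : EuclideanSpace ℝ (Fin 3) → ℝ} (hf : Integrable f volume)
    {L : ℝ} (hL : 0 ≤ L) (hfg : f =ᵐ[volume] g)
    (hg : ∀ x y : EuclideanSpace ℝ (Fin 3), ‖x - y‖ ≤ 1 / 4 →
      |g x - g y| ≤ L * ‖x - y‖ ^ α) :
    ∀ (x : EuclideanSpace ℝ (Fin 3)) (r : ℝ), 0 < r → r < 1 / 2 →
      meanOsc f x r ≤ 7 * L * r ^ α := by
  have hg1 : ∀ x y : EuclideanSpace ℝ (Fin 3), ‖x - y‖ ≤ 1 →
      |g x - g y| ≤ 4 * L * ‖x - y‖ ^ α := by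
    have := holder_extend hα0 hL 4 (by norm_num) hg
    intro x y hxy
    exact_mod_cast this x y (by push_cast; linarith)
  intro x r hr hr2
  rw [meanOsc_congr hfg]
  have hgInt : Integrable g volume := hf.congr hfg
  have hr3 : (0:ℝ) < r ^ 3 := by positivity
  have hvol : (volume (cube x r)).toReal = r ^ 3 := by
    rw [volume_cube x hr.le, ENNReal.toReal_ofReal (by positivity)]
  have hvfin : volume (cube x r) < ⊤ := volume_cube_lt_top x hr.le
  set c := cubeAvg g x r with hc
  set M : ℝ := 7 * L * r ^ α with hM
  have hrα : (0:ℝ) < r ^ α := Real.rpow_pos_of_pos hr α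
  have hM0 : 0 ≤ M := by positivity
  -- pointwise oscillation bound on the cube
  have hpt : ∀ y ∈ cube x r, |g y - c| ≤ M := by
    intro y hy
    have hIg : IntegrableOn g (cube x r) := hgInt.integrableOn
    have hIc : IntegrableOn (fun _ => g y) (cube x r) := integrableOn_const hvfin.ne
    have hdiff : IntegrableOn (fun z => |g y - g z|) (cube x r) := (hIc.sub hIg).abs
    have hbd : ∀ z ∈ cube x r, |g y - g z| ≤ M := by
      intro z hz
      have hdist : ‖y - z‖ ≤ Real.sqrt 3 * r := dist_le_of_mem_cube hr.le hy hz
      have hs3 : (1:ℝ) ≤ Real.sqrt 3 := by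
        rw [show (1:ℝ) = Real.sqrt 1 by simp]
        exact Real.sqrt_le_sqrt (by norm_num)
      have h1 : ‖y - z‖ ≤ 1 := by
        have : Real.sqrt 3 * r ≤ Real.sqrt 3 * (1/2) := by nlinarith
        have h32 : Real.sqrt 3 ≤ 7/4 := by
          rw [show (7:ℝ)/4 = Real.sqrt ((7/4)^2) by rw [Real.sqrt_sq (by norm_num)]]
          exact Real.sqrt_le_sqrt (by norm_num)
        linarith
      calc |g y - g z| ≤ 4 * L * ‖y - z‖ ^ α := hg1 y z h1
        _ ≤ 4 * L * (Real.sqrt 3 * r) ^ α :=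
            mul_le_mul_of_nonneg_left
              (Real.rpow_le_rpow (norm_nonneg _) hdist hα0.le) (by positivity)
        _ = 4 * L * (Real.sqrt 3 ^ α * r ^ α) := by
            rw [Real.mul_rpow (Real.sqrt_nonneg 3) hr.le]
        _ ≤ 4 * L * (7/4 * r ^ α) := by
            have h1' : Real.sqrt 3 ^ α ≤ Real.sqrt 3 ^ (1:ℝ) :=
              Real.rpow_le_rpow_of_exponent_le (by
                rw [show (1:ℝ) = Real.sqrt 1 by simp]
                exact Real.sqrt_le_sqrt (by norm_num)) hα1
            have h32 : Real.sqrt 3 ≤ 7/4 := by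
              rw [show (7:ℝ)/4 = Real.sqrt ((7/4)^2) by rw [Real.sqrt_sq (by norm_num)]]
              exact Real.sqrt_le_sqrt (by norm_num)
            rw [Real.rpow_one] at h1'
            gcongr
            linarith
        _ = M := by rw [hM]; ring
    -- average the bound
    have hcy : g y - c = (r ^ 3)⁻¹ * ∫ z in cube x r, (g y - g z) := by
      rw [integral_sub hIc hIg, setIntegral_const, measureReal_def, hvol, smul_eq_mul, hc, cubeAvg]
      field_simp
    rw [hcy, abs_mul, abs_of_nonneg (by positivity : (0:ℝ) ≤ (r^3)⁻¹)]
    have : |∫ z in cube x r, (g y - g z)| ≤ M * r ^ 3 := by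
      calc |∫ z in cube x r, (g y - g z)| ≤ ∫ z in cube x r, |g y - g z| := by
            simpa using norm_integral_le_integral_norm
              (μ := volume.restrict (cube x r)) (fun z => g y - g z)
        _ ≤ ∫ _z in cube x r, M := by
            refine setIntegral_mono_on hdiff (integrableOn_const hvfin.ne)
              (measurableSet_cube x r) hbd
        _ = M * r ^ 3 := by rw [setIntegral_const, measureReal_def, hvol, smul_eq_mul]; ring
    calc (r^3)⁻¹ * |∫ z in cube x r, (g y - g z)| ≤ (r^3)⁻¹ * (M * r^3) := by gcongr
      _ = M := by field_simp
  -- integrate the pointwise bound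
  have hIabs : IntegrableOn (fun y => |g y - c|) (cube x r) :=
    (hgInt.integrableOn.sub (integrableOn_const hvfin.ne)).abs
  have : ∫ y in cube x r, |g y - c| ≤ M * r ^ 3 := by
    calc ∫ y in cube x r, |g y - c| ≤ ∫ _y in cube x r, M :=
        setIntegral_mono_on hIabs (integrableOn_const hvfin.ne)
          (measurableSet_cube x r) hpt
      _ = M * r ^ 3 := by rw [setIntegral_const, measureReal_def, hvol, smul_eq_mul]; ring
  rw [meanOsc, ← hc]
  calc (r^3)⁻¹ * ∫ y in cube x r, |g y - c| ≤ (r^3)⁻¹ * (M * r^3) := by gcongr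
    _ = 7 * L * r ^ α := by rw [hM]; field_simp

open Filter Metric Topology

/-- Dyadic radii. -/
noncomputable def rad (n : ℕ) : ℝ := (1/4) * (1/2)^n

lemma rad_pos (n : ℕ) : 0 < rad n := by unfold rad; positivity
lemma rad_lt_half (n : ℕ) : rad n < 1/2 := by
  unfold rad
  have : (1/2:ℝ)^n ≤ 1 := pow_le_one₀ (by norm_num) (by norm_num)
  nlinarith
lemma rad_succ (n : ℕ) : rad (n+1) = rad n / 2 := by unfold rad; ring
lemma rad_zero : rad 0 = 1/4 := by norm_num [rad]
lemma rad_tendsto : Tendsto rad atTop (𝓝 0) := by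
  have h := tendsto_pow_atTop_nhds_zero_of_lt_one (by norm_num : (0:ℝ) ≤ 1/2) (by norm_num)
  have h2 := h.const_mul (1/4 : ℝ)
  rw [mul_zero] at h2
  unfold rad
  simpa using h2

lemma rad_rpow {α : ℝ} (hα0 : 0 < α) (n : ℕ) :
    rad n ^ α = (1/4:ℝ) ^ α * ((1/2:ℝ) ^ α) ^ n := by
  unfold rad
  rw [Real.mul_rpow (by norm_num) (by positivity)]
  congr 1
  rw [← Real.rpow_natCast ((1/2:ℝ) ^ α) n, ← Real.rpow_natCast (1/2:ℝ) n,
    ← Real.rpow_mul (by norm_num), ← Real.rpow_mul (by norm_num), mul_comm]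

set_option maxHeartbeats 2000000 in
lemma bmo_to_holder {α : ℝ} (hα0 : 0 < α) (hα1 : α ≤ 1)
    {f : EuclideanSpace ℝ (Fin 3) → ℝ} (hf : Integrable f volume)
    {K : ℝ} (hK0 : 0 ≤ K)
    (hK : ∀ (x : EuclideanSpace ℝ (Fin 3)) (r : ℝ), 0 < r → r < 1/2 →
      meanOsc f x r ≤ K * r ^ α) :
    ∃ (g : EuclideanSpace ℝ (Fin 3) → ℝ) (L : ℝ), 0 ≤ L ∧ f =ᵐ[volume] g ∧
      ∀ x y : EuclideanSpace ℝ (Fin 3), ‖x - y‖ ≤ 1 / 4 →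
        |g x - g y| ≤ L * ‖x - y‖ ^ α := by
  classical
  set w : ℝ := (1/2:ℝ) ^ α with hw
  have hw0 : 0 < w := Real.rpow_pos_of_pos (by norm_num) α
  have hw1 : w < 1 := Real.rpow_lt_one (by norm_num) (by norm_num) hα0
  have h1w : 0 < 1 - w := by linarith
  set C : ℝ := 8 * K * (1/4:ℝ) ^ α with hC
  have hC0 : 0 ≤ C := by
    have : (0:ℝ) ≤ (1/4:ℝ) ^ α := (Real.rpow_pos_of_pos (by norm_num) α).le
    positivity
  set a : EuclideanSpace ℝ (Fin 3) → ℕ → ℝ := fun x n => cubeAvg f x (rad n) with ha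
  -- dyadic step estimate
  have hstep : ∀ (x : EuclideanSpace ℝ (Fin 3)) (n : ℕ),
      dist (a x n) (a x (n+1)) ≤ C * w ^ n := by
    intro x n
    have hsub : cube x (rad (n+1)) ⊆ cube x (rad n) := by
      apply cube_subset_cube
      rw [sub_self, norm_zero]
      rw [rad_succ]
      have := rad_pos n
      linarith
    have h := cubeAvg_sub_cubeAvg f hf (rad_pos n) (rad_pos (n+1)) hsub
    have hosc := hK x (rad n) (rad_pos n) (rad_lt_half n)
    have hratio : (rad (n+1) ^ 3)⁻¹ * (rad n ^ 3) = 8 := by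
      rw [rad_succ]
      have := (rad_pos n).ne'
      field_simp
      ring
    have hrn3 : (0:ℝ) < rad n ^ 3 := pow_pos (rad_pos n) 3
    have hrn13 : (0:ℝ) < rad (n+1) ^ 3 := pow_pos (rad_pos (n+1)) 3
    rw [Real.dist_eq, abs_sub_comm]
    show |cubeAvg f x (rad (n+1)) - cubeAvg f x (rad n)| ≤ C * w ^ n
    calc |cubeAvg f x (rad (n+1)) - cubeAvg f x (rad n)| ≤ (rad (n+1) ^ 3)⁻¹ * (rad n ^ 3 * meanOsc f x (rad n)) := h
      _ ≤ (rad (n+1) ^ 3)⁻¹ * (rad n ^ 3 * (K * rad n ^ α)) := by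
          refine mul_le_mul_of_nonneg_left ?_ (inv_nonneg.2 hrn13.le)
          exact mul_le_mul_of_nonneg_left hosc hrn3.le
      _ = 8 * K * rad n ^ α := by
          rw [show (rad (n+1) ^ 3)⁻¹ * (rad n ^ 3 * (K * rad n ^ α)) =
            ((rad (n+1) ^ 3)⁻¹ * rad n ^ 3) * (K * rad n ^ α) by ring, hratio]
          ring
      _ = C * w ^ n := by rw [rad_rpow hα0, hC, hw]; ring
  have hcau : ∀ x, CauchySeq (a x) := fun x =>
    cauchySeq_of_le_geometric w C hw1 (hstep x)
  set g : EuclideanSpace ℝ (Fin 3) → ℝ := fun x => limUnder atTop (a x) with hg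
  have htend : ∀ x, Tendsto (a x) atTop (𝓝 (g x)) := fun x => (hcau x).tendsto_limUnder
  have hdistlim : ∀ x n, dist (a x n) (g x) ≤ C * w ^ n / (1 - w) := fun x n =>
    dist_le_of_le_geometric_of_tendsto w C hw1 (hstep x) (htend x) n
  -- geometric decay of `rad n ^ α`
  have hradα0 : Tendsto (fun n => rad n ^ α) atTop (𝓝 0) := by
    have h1 : Tendsto (fun n : ℕ => w ^ n) atTop (𝓝 0) :=
      tendsto_pow_atTop_nhds_zero_of_lt_one hw0.le hw1
    have h2 := h1.const_mul ((1/4:ℝ) ^ α)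
    rw [mul_zero] at h2
    exact h2.congr fun n => (rad_rpow hα0 n).symm
  -- a.e. identification via the Lebesgue differentiation theorem
  set c1 : ℝ := (volume (closedBall (0 : EuclideanSpace ℝ (Fin 3)) 1)).toReal with hc1
  have hc1pos : 0 < c1 :=
    ENNReal.toReal_pos (measure_closedBall_pos volume 0 one_pos).ne'
      measure_closedBall_lt_top.ne
  have hvolB : ∀ (z : EuclideanSpace ℝ (Fin 3)) (s : ℝ), 0 ≤ s →
      (volume (closedBall z s)).toReal = s ^ 3 * c1 := by
    intro z s hs
    rw [Measure.addHaar_closedBall' volume z hs, finrank_euclideanSpace_fin,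
      ENNReal.toReal_mul, ENNReal.toReal_ofReal (by positivity)]
  have hae : f =ᵐ[volume] g := by
    have hloc : LocallyIntegrable f volume := hf.locallyIntegrable
    filter_upwards [IsUnifLocDoublingMeasure.ae_tendsto_average (μ := volume) hloc 1] with x hx
    have hδ : Tendsto (fun n => rad n / 4) atTop (𝓝[>] 0) := by
      rw [tendsto_nhdsWithin_iff]
      constructor
      · simpa using rad_tendsto.div_const 4
      · filter_upwards with n
        have := rad_pos n
        rw [mem_Ioi]
        linarith
    have hmem : ∀ᶠ n in atTop, x ∈ closedBall x (1 * (rad n / 4)) := by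
      filter_upwards with n
      have := rad_pos n
      exact mem_closedBall_self (by linarith)
    have hball := hx (fun _ => x) (fun n => rad n / 4) hδ hmem
    have hcomp : ∀ n, |(⨍ y in closedBall x (rad n / 4), f y) - a x n| ≤
        64 / c1 * (K * rad n ^ α) := by
      intro n
      have hrn := rad_pos n
      have hsub : closedBall x (rad n / 4) ⊆ cube x (rad n) :=
        closedBall_subset_cube (by linarith)
      have hpos : 0 < volume (closedBall x (rad n / 4)) :=
        measure_closedBall_pos volume x (by linarith)
      have h := key_avg_sub f hf (rad_pos n) hsub hpos
      have hA : (⨍ y in closedBall x (rad n / 4), f y) =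
          (volume (closedBall x (rad n / 4))).toReal⁻¹ *
            ∫ y in closedBall x (rad n / 4), f y := by
        rw [setAverage_eq, smul_eq_mul, measureReal_def]
      rw [hA]
      have hv : (volume (closedBall x (rad n / 4))).toReal = (rad n / 4) ^ 3 * c1 :=
        hvolB x _ (by linarith)
      calc |(volume (closedBall x (rad n / 4))).toReal⁻¹ *
            (∫ y in closedBall x (rad n / 4), f y) - cubeAvg f x (rad n)|
          ≤ (volume (closedBall x (rad n / 4))).toReal⁻¹ *
            (rad n ^ 3 * meanOsc f x (rad n)) := h
        _ ≤ (volume (closedBall x (rad n / 4))).toReal⁻¹ *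
            (rad n ^ 3 * (K * rad n ^ α)) := by
            refine mul_le_mul_of_nonneg_left ?_ (inv_nonneg.2 ENNReal.toReal_nonneg)
            exact mul_le_mul_of_nonneg_left (hK x (rad n) hrn (rad_lt_half n))
              (pow_pos hrn 3).le
        _ = 64 / c1 * (K * rad n ^ α) := by
            rw [hv]
            have h1 : rad n ≠ 0 := hrn.ne'
            have h2 : c1 ≠ 0 := hc1pos.ne'
            field_simp
            ring
    have hbound0 : Tendsto (fun n => 64 / c1 * (K * rad n ^ α)) atTop (𝓝 0) := by
      have := (hradα0.const_mul K).const_mul (64 / c1)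
      rw [mul_zero, mul_zero] at this
      exact this
    have hdiff0 : Tendsto (fun n => a x n - ⨍ y in closedBall x (rad n / 4), f y)
        atTop (𝓝 0) := by
      apply squeeze_zero_norm _ hbound0
      intro n
      rw [Real.norm_eq_abs, abs_sub_comm]
      exact hcomp n
    have htendf : Tendsto (a x) atTop (𝓝 (f x)) := by
      have := hdiff0.add hball
      rw [zero_add] at this
      exact this.congr fun n => by ring
    exact tendsto_nhds_unique htendf (htend x)
  -- Hölder estimate for small distances
  set L0 : ℝ := (32 / (1 - w) + 324) * K with hL0
  have hL00 : 0 ≤ L0 := by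
    have h32 : (0:ℝ) ≤ 32 / (1 - w) := div_nonneg (by norm_num) h1w.le
    have : (0:ℝ) ≤ 32 / (1 - w) + 324 := by linarith
    exact mul_nonneg this hK0
  have hsmall : ∀ x y : EuclideanSpace ℝ (Fin 3), ‖x - y‖ ≤ 1/16 →
      |g x - g y| ≤ L0 * ‖x - y‖ ^ α := by
    intro x y hxy
    by_cases hd0 : ‖x - y‖ = 0
    · have hxy0 : x = y := by rwa [norm_eq_zero, sub_eq_zero] at hd0
      subst hxy0
      rw [hd0, Real.zero_rpow hα0.ne', mul_zero, sub_self, abs_zero]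
    have hd : 0 < ‖x - y‖ := lt_of_le_of_ne (norm_nonneg _) (Ne.symm hd0)
    set d := ‖x - y‖ with hdd
    have hdα : 0 < d ^ α := Real.rpow_pos_of_pos hd α
    -- choose the dyadic scale
    have hex : ∃ n, rad n < d := (rad_tendsto.eventually_lt_const hd).exists
    have hN0 : Nat.find hex ≠ 0 := by
      intro h
      have := Nat.find_spec hex
      rw [h, rad_zero] at this
      linarith
    obtain ⟨n, hn⟩ : ∃ n, Nat.find hex = n + 1 :=
      ⟨Nat.find hex - 1, (Nat.succ_pred_eq_of_pos (Nat.pos_of_ne_zero hN0)).symm⟩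
    have hNlt : rad (n+1) < d := by rw [← hn]; exact Nat.find_spec hex
    have hdn : d ≤ rad n := le_of_not_gt (Nat.find_min hex (by omega))
    have hup : rad n < 2 * d := by
      have := rad_succ n
      linarith
    set R : ℝ := 3 * rad n with hR
    have hrn := rad_pos n
    have hRpos : 0 < R := by rw [hR]; linarith
    have hR2 : R < 1/2 := by
      have : d ≤ 1/16 := hxy
      rw [hR]; linarith
    have hsub1 : cube x (rad n) ⊆ cube x R := by
      apply cube_subset_cube
      rw [sub_self, norm_zero]
      rw [hR]; linarith
    have hsub2 : cube y (rad n) ⊆ cube x R := by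
      apply cube_subset_cube
      rw [norm_sub_rev, ← hdd, hR]
      linarith
    have e1 := cubeAvg_sub_cubeAvg f hf hRpos (rad_pos n) hsub1
    have e2 := cubeAvg_sub_cubeAvg f hf hRpos (rad_pos n) hsub2
    have hOsc := hK x R hRpos hR2
    have hRd : R ^ α ≤ 6 * d ^ α := by
      have h6 : R ≤ 6 * d := by rw [hR]; linarith
      calc R ^ α ≤ (6 * d) ^ α := Real.rpow_le_rpow hRpos.le h6 hα0.le
        _ = 6 ^ α * d ^ α := Real.mul_rpow (by norm_num) hd.le
        _ ≤ 6 * d ^ α := by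
            have h61 : (6:ℝ) ^ α ≤ 6 ^ (1:ℝ) :=
              Real.rpow_le_rpow_of_exponent_le (by norm_num) hα1
            rw [Real.rpow_one] at h61
            nlinarith
    have hratio : (rad n ^ 3)⁻¹ * R ^ 3 = 27 := by
      rw [hR]; field_simp; ring
    have keybound : ∀ z : EuclideanSpace ℝ (Fin 3),
        |cubeAvg f z (rad n) - cubeAvg f x R| ≤ (rad n ^ 3)⁻¹ * (R ^ 3 * meanOsc f x R) →
        |cubeAvg f z (rad n) - cubeAvg f x R| ≤ 162 * K * d ^ α := by
      intro z e
      calc |cubeAvg f z (rad n) - cubeAvg f x R|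
          ≤ (rad n ^ 3)⁻¹ * (R ^ 3 * meanOsc f x R) := e
        _ ≤ (rad n ^ 3)⁻¹ * (R ^ 3 * (K * R ^ α)) := by
            refine mul_le_mul_of_nonneg_left ?_ (inv_nonneg.2 (pow_pos hrn 3).le)
            exact mul_le_mul_of_nonneg_left hOsc (pow_pos hRpos 3).le
        _ = 27 * (K * R ^ α) := by
            rw [show (rad n ^ 3)⁻¹ * (R ^ 3 * (K * R ^ α)) =
              ((rad n ^ 3)⁻¹ * R ^ 3) * (K * R ^ α) by ring, hratio]
        _ ≤ 27 * (K * (6 * d ^ α)) := by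
            refine mul_le_mul_of_nonneg_left ?_ (by norm_num)
            exact mul_le_mul_of_nonneg_left hRd hK0
        _ = 162 * K * d ^ α := by ring
    have key1 := keybound x e1
    have key2 := keybound y e2
    have htail : ∀ z : EuclideanSpace ℝ (Fin 3),
        dist (a z n) (g z) ≤ 16 * K * d ^ α / (1 - w) := by
      intro z
      refine (hdistlim z n).trans ?_
      have h1 : C * w ^ n = 8 * K * rad n ^ α := by rw [rad_rpow hα0, hC, hw]; ring
      have h2 : rad n ^ α ≤ 2 * d ^ α := by
        calc rad n ^ α ≤ (2 * d) ^ α := Real.rpow_le_rpow hrn.le hup.le hα0.le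
          _ = 2 ^ α * d ^ α := Real.mul_rpow (by norm_num) hd.le
          _ ≤ 2 * d ^ α := by
              have h3 : (2:ℝ) ^ α ≤ 2 ^ (1:ℝ) :=
                Real.rpow_le_rpow_of_exponent_le (by norm_num) hα1
              rw [Real.rpow_one] at h3
              nlinarith
      rw [h1]
      have hnum : 8 * K * rad n ^ α ≤ 16 * K * d ^ α := by nlinarith
      exact div_le_div_of_nonneg_right hnum h1w.le
    have tri : dist (g x) (g y) ≤ dist (g x) (a x n) + dist (a x n) (cubeAvg f x R) +
        (dist (cubeAvg f x R) (a y n) + dist (a y n) (g y)) :=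
      (dist_triangle4 (g x) (a x n) (cubeAvg f x R) (g y)).trans
        (by linarith [dist_triangle (cubeAvg f x R) (a y n) (g y)])
    rw [Real.dist_eq] at tri
    have hax : dist (g x) (a x n) ≤ 16 * K * d ^ α / (1 - w) := by
      rw [dist_comm]; exact htail x
    have hay : dist (a y n) (g y) ≤ 16 * K * d ^ α / (1 - w) := htail y
    have hbx : dist (a x n) (cubeAvg f x R) ≤ 162 * K * d ^ α := by
      rw [Real.dist_eq]; exact key1
    have hby : dist (cubeAvg f x R) (a y n) ≤ 162 * K * d ^ α := by
      rw [Real.dist_eq, abs_sub_comm]; exact key2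
    have : |g x - g y| ≤ 2 * (16 * K * d ^ α / (1 - w)) + 2 * (162 * K * d ^ α) := by
      linarith
    calc |g x - g y| ≤ 2 * (16 * K * d ^ α / (1 - w)) + 2 * (162 * K * d ^ α) := this
      _ = (32 / (1 - w) + 324) * K * d ^ α := by field_simp; ring
      _ = L0 * d ^ α := by rw [hL0]
  -- extend from distance 1/16 to 1/4 by chaining
  refine ⟨g, 4 * L0, by linarith, hae, ?_⟩
  intro x y hxy
  have h4 := holder_extend hα0 hL00 4 (by norm_num) hsmall x y
    (by push_cast; linarith)
  push_cast at h4
  linarith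
/-- **Campanato–Meyers equivalence.** For `α ∈ (0,1]` and `f ∈ L¹(ℝ³)`, the power-weight bmo
condition `Ω(f, I(x,r)) ≤ K·r^α` (for all `x`, `0 < r < 1/2`) holds for some `K ≥ 0` iff `f`
has a representative `g` that is locally `α`-Hölder: `|g(x) − g(y)| ≤ L·|x−y|^α` whenever
`|x − y| ≤ 1/4`. -/
theorem bmo_power_weight_iff_holder
    (α : ℝ) (hα0 : 0 < α) (hα1 : α ≤ 1)
    (f : EuclideanSpace ℝ (Fin 3) → ℝ) (hf : Integrable f volume) :
    (∃ K : ℝ, 0 ≤ K ∧ ∀ (x : EuclideanSpace ℝ (Fin 3)) (r : ℝ), 0 < r → r < 1 / 2 →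
        meanOsc f x r ≤ K * r ^ α) ↔
    (∃ (g : EuclideanSpace ℝ (Fin 3) → ℝ) (L : ℝ), 0 ≤ L ∧ f =ᵐ[volume] g ∧
        ∀ x y : EuclideanSpace ℝ (Fin 3), ‖x - y‖ ≤ 1 / 4 →
          |g x - g y| ≤ L * ‖x - y‖ ^ α) := by
  constructor
  · rintro ⟨K, hK0, hK⟩
    exact bmo_to_holder hα0 hα1 hf hK0 hK
  · rintro ⟨g, L, hL, hfg, hg⟩
    exact ⟨7 * L, by linarith, holder_to_bmo hα0 hα1 hf hL hfg hg⟩
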